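/- Let J be jobs with Δ_i ≥ 0 (not all zero), o_i > 0, and shift u > 0. Form airplanes A = J ∪ {a_*} with v_i = Δ_i, c_i = o_i for i ∈ J, c_* = u, and v_* = (c_*·max_j v_j / c_•²)·(c_* + Σ_j c_j) where c_• = min(c_*, min_j c_j). Then for any dropout order π* of A in which a_* is dropped last, Σ_{i∈A} v_i/C_i = v_*/c_* + Σ_{i∈J} Δ_i/(u + O_i), where C_i = Σ_{j: π*(j) ≥ π*(i)} c_j and O_i = C_i − c_* for i ∈ J. Hence an ordering of J maximizes Σ_i Δ_i/(u+O_i) if and only if the corresponding dropout order of A (with a_* last) maximizes fleet range among orders with a_* last. -/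

import Mathlib

open Finset

/-- Reduction from Robust Appointment Scheduling to Airplane Refueling: with
the auxiliary airplane `a_* = Fin.last n` (consumption rate `u`, tank volume
`v_*`) dropped last, the fleet range equals `v_*/u + Σ_i Δ_i/(u+O_i)`; hence,
among dropout orders dropping `a_*` last, maximizing the range is equivalent to
maximizing `Σ_i Δ_i/(u+O_i)`. -/
theorem ras_to_ar_reduction (n : ℕ) (hn : 0 < n) (Δ o : Fin n → ℝ)
    (hΔ : ∀ i, 0 ≤ Δ i) (hΔne : ∃ i, Δ i ≠ 0) (ho : ∀ i, 0 < o i)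
    (u : ℝ) (hu : 0 < u) :
    let cb : ℝ := min u (Finset.univ.inf' ⟨⟨0, hn⟩, Finset.mem_univ _⟩ o)
    let vstar : ℝ := u * (Finset.univ.sup' ⟨⟨0, hn⟩, Finset.mem_univ _⟩ Δ) / cb ^ 2
        * (u + ∑ j, o j)
    let v : Fin (n + 1) → ℝ := fun i => if h : i = Fin.last n then vstar else Δ (i.castPred h)
    let c : Fin (n + 1) → ℝ := fun i => if h : i = Fin.last n then u else o (i.castPred h)
    let C : Equiv.Perm (Fin (n + 1)) → Fin (n + 1) → ℝ := fun π i =>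
      ∑ j ∈ Finset.univ.filter (fun j => π i ≤ π j), c j
    let O : Equiv.Perm (Fin (n + 1)) → Fin n → ℝ := fun π i => C π i.castSucc - u
    (∀ π : Equiv.Perm (Fin (n + 1)), π (Fin.last n) = Fin.last n →
      ∑ i, v i / C π i = vstar / u + ∑ i : Fin n, Δ i / (u + O π i)) ∧
    (∀ π π' : Equiv.Perm (Fin (n + 1)),
      π (Fin.last n) = Fin.last n → π' (Fin.last n) = Fin.last n →
      (∑ i, v i / C π i ≤ ∑ i, v i / C π' i
        ↔ ∑ i : Fin n, Δ i / (u + O π i) ≤ ∑ i : Fin n, Δ i / (u + O π' i))) := by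
  intro cb vstar v c C O
  have hClast : ∀ π : Equiv.Perm (Fin (n+1)), π (Fin.last n) = Fin.last n →
      C π (Fin.last n) = u := by
    intro π hπ
    have hfilt : Finset.univ.filter (fun j => π (Fin.last n) ≤ π j) = {Fin.last n} := by
      ext j
      simp only [Finset.mem_filter, Finset.mem_univ, true_and, Finset.mem_singleton, hπ]
      constructor
      · intro h
        have : π j = Fin.last n := le_antisymm (Fin.le_last _) h
        have := π.injective (this.trans hπ.symm)
        exact this
      · rintro rfl; rw [hπ]
    simp [C, hfilt, c]
  have key : ∀ π : Equiv.Perm (Fin (n+1)), π (Fin.last n) = Fin.last n →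
      ∑ i, v i / C π i = vstar / u + ∑ i : Fin n, Δ i / (u + O π i) := by
    intro π hπ
    rw [Fin.sum_univ_castSucc, add_comm]
    congr 1
    · simp [v, hClast π hπ]
    · apply Finset.sum_congr rfl
      intro i _
      have h1 : (i.castSucc : Fin (n+1)) ≠ Fin.last n := (Fin.castSucc_lt_last i).ne
      simp only [v, O, h1, dif_neg, Fin.castPred_castSucc]
      congr 1
      ring
  refine ⟨key, fun π π' hπ hπ' => ?_⟩
  rw [key π hπ, key π' hπ']
  exact add_le_add_iff_left _
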